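/- arXiv:2510.07470 — 2 statements merged into one kernel-verified Lean document; each statement's English description precedes it below -/
import Mathlib

section
/- Let f, g : ℝ^d → ℝ be differentiable with L_f- and L_g-Lipschitz gradients respectively, L = L_f + L_g, F = f + g, θ ∈ (0,1], and 0 < η ≤ 1/L. Let x^{−1} = x⁰, x¹, …, x^𝒦 and z⁰, …, z^{𝒦−1} (𝒦 ≥ 1) be an inertial proximal epoch, i.e. z^k = x^k + (1−θ)(x^k − x^{k−1}) and (z^k − x^{k+1})/η = ∇f(x^{k+1}) + ∇g(z^k) for k = 0,…,𝒦−1. Then F(x^𝒦) − F(x⁰) ≤ (1/2)·(1/η + L)·Σ_{k=0}^{𝒦−1}‖x^{k+1} − x^k‖² − (1/(2η) − L_f²/(2L) − (3/2)·L)·Σ_{k=0}^{𝒦−1}‖z^k − x^{k+1}‖². -/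
open scoped RealInnerProductSpace

lemma descent_lemma {E : Type*} [NormedAddCommGroup E] [InnerProductSpace ℝ E] [CompleteSpace E]
    (h : E → ℝ) (C : ℝ) (hC : 0 ≤ C) (hdiff : Differentiable ℝ h)
    (hlip : ∀ a b : E, ‖gradient h a - gradient h b‖ ≤ C * ‖a - b‖) (x y : E) :
    h y ≤ h x + ⟪gradient h x, y - x⟫ + C / 2 * ‖y - x‖ ^ 2 := by
  set v := y - x with hv
  have hc : ∀ t : ℝ, HasDerivAt (fun t : ℝ => x + t • v) v t := fun t => by
    simpa using ((hasDerivAt_id t).smul_const v).const_add x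
  have hinner : ∀ p : E, fderiv ℝ h p v = ⟪gradient h p, v⟫ := fun p => by
    rw [gradient, InnerProductSpace.toDual_symm_apply]
  set φ' : ℝ → ℝ := fun t => ⟪gradient h (x + t • v), v⟫ with hφ'
  have hderiv : ∀ t : ℝ, HasDerivAt (fun t : ℝ => h (x + t • v)) (φ' t) t := by
    intro t
    have := (hdiff (x + t • v)).hasFDerivAt.comp_hasDerivAt t (hc t)
    show HasDerivAt _ ⟪gradient h (x + t • v), v⟫ t
    rw [← hinner]
    exact this
  have hgradcont : Continuous fun p : E => gradient h p := by
    refine (LipschitzWith.of_dist_le_mul (K := C.toNNReal) ?_).continuous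
    intro a b
    rw [dist_eq_norm, dist_eq_norm, Real.coe_toNNReal C hC]
    exact hlip a b
  have hφ'cont : Continuous φ' := by
    apply Continuous.inner
    · exact hgradcont.comp (by continuity)
    · exact continuous_const
  have hFTC : ∫ t in (0:ℝ)..1, φ' t = h (x + (1:ℝ) • v) - h (x + (0:ℝ) • v) :=
    intervalIntegral.integral_eq_sub_of_hasDerivAt (fun t _ => hderiv t)
      (hφ'cont.intervalIntegrable 0 1)
  have hxy : x + (1:ℝ) • v = y := by rw [hv]; simp
  rw [hxy] at hFTC
  simp only [zero_smul, add_zero] at hFTC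
  have hbound : ∀ t ∈ Set.Icc (0:ℝ) 1, φ' t ≤ ⟪gradient h x, v⟫ + C * ‖v‖ ^ 2 * t := by
    intro t ht
    have h1 : φ' t - ⟪gradient h x, v⟫ = ⟪gradient h (x + t • v) - gradient h x, v⟫ := by
      rw [inner_sub_left]
    have h2 := real_inner_le_norm (gradient h (x + t • v) - gradient h x) v
    have h3 : ‖gradient h (x + t • v) - gradient h x‖ ≤ C * (t * ‖v‖) := by
      have := hlip (x + t • v) x
      simpa [norm_smul, abs_of_nonneg ht.1, mul_assoc] using this
    have h4 := mul_le_mul_of_nonneg_right h3 (norm_nonneg v)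
    have h5 : ‖v‖ * ‖v‖ = ‖v‖ ^ 2 := by ring
    nlinarith [norm_nonneg v]
  have hint2 : IntervalIntegrable (fun t : ℝ => ⟪gradient h x, v⟫ + C * ‖v‖ ^ 2 * t)
      MeasureTheory.volume 0 1 :=
    (continuous_const.add (continuous_const.mul continuous_id)).intervalIntegrable 0 1
  have hmono : ∫ t in (0:ℝ)..1, φ' t
      ≤ ∫ t in (0:ℝ)..1, (⟪gradient h x, v⟫ + C * ‖v‖ ^ 2 * t) :=
    intervalIntegral.integral_mono_on (by norm_num) (hφ'cont.intervalIntegrable 0 1) hint2 hbound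
  have hval : ∫ t in (0:ℝ)..1, (⟪gradient h x, v⟫ + C * ‖v‖ ^ 2 * t)
      = ⟪gradient h x, v⟫ + C * ‖v‖ ^ 2 / 2 := by
    rw [intervalIntegral.integral_add (intervalIntegrable_const)
      ((by continuity : Continuous fun t : ℝ => C * ‖v‖ ^ 2 * t).intervalIntegrable 0 1)]
    rw [intervalIntegral.integral_const_mul, integral_id,
      intervalIntegral.integral_const]
    norm_num
    ring
  rw [hval] at hmono
  rw [hFTC] at hmono
  linarith


lemma descent_lemma_lower {E : Type*} [NormedAddCommGroup E] [InnerProductSpace ℝ E]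
    [CompleteSpace E]
    (h : E → ℝ) (C : ℝ) (hC : 0 ≤ C) (hdiff : Differentiable ℝ h)
    (hlip : ∀ a b : E, ‖gradient h a - gradient h b‖ ≤ C * ‖a - b‖) (x y : E) :
    h x + ⟪gradient h x, y - x⟫ - C / 2 * ‖y - x‖ ^ 2 ≤ h y := by
  set v := y - x with hv
  have hc : ∀ t : ℝ, HasDerivAt (fun t : ℝ => x + t • v) v t := fun t => by
    simpa using ((hasDerivAt_id t).smul_const v).const_add x
  have hinner : ∀ p : E, fderiv ℝ h p v = ⟪gradient h p, v⟫ := fun p => by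
    rw [gradient, InnerProductSpace.toDual_symm_apply]
  set φ' : ℝ → ℝ := fun t => ⟪gradient h (x + t • v), v⟫ with hφ'
  have hderiv : ∀ t : ℝ, HasDerivAt (fun t : ℝ => h (x + t • v)) (φ' t) t := by
    intro t
    have := (hdiff (x + t • v)).hasFDerivAt.comp_hasDerivAt t (hc t)
    show HasDerivAt _ ⟪gradient h (x + t • v), v⟫ t
    rw [← hinner]
    exact this
  have hgradcont : Continuous fun p : E => gradient h p := by
    refine (LipschitzWith.of_dist_le_mul (K := C.toNNReal) ?_).continuous
    intro a b
    rw [dist_eq_norm, dist_eq_norm, Real.coe_toNNReal C hC]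
    exact hlip a b
  have hφ'cont : Continuous φ' := by
    apply Continuous.inner
    · exact hgradcont.comp (by continuity)
    · exact continuous_const
  have hFTC : ∫ t in (0:ℝ)..1, φ' t = h (x + (1:ℝ) • v) - h (x + (0:ℝ) • v) :=
    intervalIntegral.integral_eq_sub_of_hasDerivAt (fun t _ => hderiv t)
      (hφ'cont.intervalIntegrable 0 1)
  have hxy : x + (1:ℝ) • v = y := by rw [hv]; simp
  rw [hxy] at hFTC
  simp only [zero_smul, add_zero] at hFTC
  have hbound : ∀ t ∈ Set.Icc (0:ℝ) 1, ⟪gradient h x, v⟫ - C * ‖v‖ ^ 2 * t ≤ φ' t := by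
    intro t ht
    have h1 : ⟪gradient h x, v⟫ - φ' t = ⟪gradient h x - gradient h (x + t • v), v⟫ := by
      rw [inner_sub_left]
    have h2 := real_inner_le_norm (gradient h x - gradient h (x + t • v)) v
    have h3 : ‖gradient h x - gradient h (x + t • v)‖ ≤ C * (t * ‖v‖) := by
      have := hlip x (x + t • v)
      simpa [norm_smul, abs_of_nonneg ht.1, mul_assoc, norm_sub_rev] using this
    have h4 := mul_le_mul_of_nonneg_right h3 (norm_nonneg v)
    have h5 : ‖v‖ * ‖v‖ = ‖v‖ ^ 2 := by ring
    nlinarith [norm_nonneg v]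
  have hint2 : IntervalIntegrable (fun t : ℝ => ⟪gradient h x, v⟫ - C * ‖v‖ ^ 2 * t)
      MeasureTheory.volume 0 1 :=
    (continuous_const.sub (continuous_const.mul continuous_id)).intervalIntegrable 0 1
  have hmono : ∫ t in (0:ℝ)..1, (⟪gradient h x, v⟫ - C * ‖v‖ ^ 2 * t)
      ≤ ∫ t in (0:ℝ)..1, φ' t :=
    intervalIntegral.integral_mono_on (by norm_num) hint2 (hφ'cont.intervalIntegrable 0 1) hbound
  have hval : ∫ t in (0:ℝ)..1, (⟪gradient h x, v⟫ - C * ‖v‖ ^ 2 * t)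
      = ⟪gradient h x, v⟫ - C * ‖v‖ ^ 2 / 2 := by
    rw [intervalIntegral.integral_sub (intervalIntegrable_const)
      ((by continuity : Continuous fun t : ℝ => C * ‖v‖ ^ 2 * t).intervalIntegrable 0 1),
      intervalIntegral.integral_const_mul, integral_id, intervalIntegral.integral_const]
    norm_num
    ring
  rw [hval] at hmono
  rw [hFTC] at hmono
  linarith

set_option maxHeartbeats 1000000 in
/-- Decrease estimate along an inertial proximal epoch
(the convention `x^{-1} = x^0` is realized by truncated subtraction on `ℕ`). -/
theorem inertial_prox_epoch_decrease
    {d : ℕ} (hd : 1 ≤ d)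
    (f g : EuclideanSpace ℝ (Fin d) → ℝ) (Lf Lg L : ℝ)
    (hLdef : L = Lf + Lg) (hL : 0 < L)
    (hfd : Differentiable ℝ f) (hgd : Differentiable ℝ g)
    (hflip : ∀ a b : EuclideanSpace ℝ (Fin d),
      ‖gradient f a - gradient f b‖ ≤ Lf * ‖a - b‖)
    (hglip : ∀ a b : EuclideanSpace ℝ (Fin d),
      ‖gradient g a - gradient g b‖ ≤ Lg * ‖a - b‖)
    (θ η : ℝ) (hθ0 : 0 < θ) (hθ1 : θ ≤ 1) (hη0 : 0 < η) (hη1 : η ≤ 1 / L)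
    (𝒦 : ℕ) (h𝒦 : 1 ≤ 𝒦)
    (x z : ℕ → EuclideanSpace ℝ (Fin d))
    (hz : ∀ k < 𝒦, z k = x k + (1 - θ) • (x k - x (k - 1)))
    (hchar : ∀ k < 𝒦,
      (1 / η) • (z k - x (k + 1)) = gradient f (x (k + 1)) + gradient g (z k)) :
    (f (x 𝒦) + g (x 𝒦)) - (f (x 0) + g (x 0)) ≤
      (1 / 2) * (1 / η + L) * ∑ k ∈ Finset.range 𝒦, ‖x (k + 1) - x k‖ ^ 2
      - (1 / (2 * η) - Lf ^ 2 / (2 * L) - (3 / 2) * L)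
        * ∑ k ∈ Finset.range 𝒦, ‖z k - x (k + 1)‖ ^ 2 := by
  -- nonnegativity of the Lipschitz constants
  have hone : ‖(EuclideanSpace.single (⟨0, hd⟩ : Fin d) (1:ℝ)) - 0‖ = 1 := by
    simp [EuclideanSpace.norm_single]
  have hLf0 : 0 ≤ Lf := by
    have h1 := hflip (EuclideanSpace.single (⟨0, hd⟩ : Fin d) (1:ℝ)) 0
    rw [hone] at h1
    have := norm_nonneg (gradient f (EuclideanSpace.single (⟨0, hd⟩ : Fin d) (1:ℝ))
      - gradient f 0)
    linarith
  have hLg0 : 0 ≤ Lg := by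
    have h1 := hglip (EuclideanSpace.single (⟨0, hd⟩ : Fin d) (1:ℝ)) 0
    rw [hone] at h1
    have := norm_nonneg (gradient g (EuclideanSpace.single (⟨0, hd⟩ : Fin d) (1:ℝ))
      - gradient g 0)
    linarith
  have hLgL : Lg ≤ L := by rw [hLdef]; linarith
  have hLfL : Lf ≤ L := by rw [hLdef]; linarith
  set c : ℝ := 1 / η with hcdef
  have hc0 : 0 < c := by positivity
  have hcL : L ≤ c := by
    rw [hcdef, le_div_iff₀ hη0]
    calc L * η = η * L := by ring
    _ ≤ (1 / L) * L := by
        exact mul_le_mul_of_nonneg_right hη1 hL.le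
    _ = 1 := by field_simp
  have hc2 : 1 / (2 * η) = c / 2 := by
    rw [hcdef]; field_simp
  rw [hc2]
  -- the per-step estimate
  have key : ∀ k < 𝒦, f (x (k + 1)) + g (x (k + 1)) - (f (x k) + g (x k)) ≤
      c / 2 * ‖x k - x (k - 1)‖ ^ 2
      + (L / 2 + Lg / 2 - c / 2) * ‖x (k + 1) - x k‖ ^ 2
      + (Lg / 2 - c / 2) * ‖z k - x (k + 1)‖ ^ 2 := by
    intro k hk
    set p := x k with hp
    set q := x (k + 1) with hq
    set w := z k with hw
    set r := x (k - 1) with hr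
    have hfe := descent_lemma_lower f Lf hLf0 hfd hflip q p
    have hge := descent_lemma_lower g Lg hLg0 hgd hglip q p
    have hch : c • (w - q) = gradient f q + gradient g w := hchar k hk
    have hzz : w = p + (1 - θ) • (p - r) := hz k hk
    have hfq : gradient f q = c • (w - q) - gradient g w := eq_sub_of_add_eq hch.symm
    have hA1 : ⟪gradient f q, p - q⟫ = c * ⟪w - q, p - q⟫ - ⟪gradient g w, p - q⟫ := by
      rw [hfq, inner_sub_left, real_inner_smul_left]
    have e2 : 2 * ⟪w - q, p - q⟫ = ‖w - q‖ ^ 2 + ‖q - p‖ ^ 2 - ‖w - p‖ ^ 2 := by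
      have h0 := norm_add_sq_real (w - q) (q - p)
      have h1 : w - q + (q - p) = w - p := by abel
      have h2 : ⟪w - q, p - q⟫ = -⟪w - q, q - p⟫ := by
        rw [show p - q = -(q - p) by abel, inner_neg_right]
      rw [h1] at h0
      linarith
    have e2c : c * (2 * ⟪w - q, p - q⟫) = c * (‖w - q‖ ^ 2 + ‖q - p‖ ^ 2 - ‖w - p‖ ^ 2) := by
      rw [e2]
    have e3 : ⟪gradient g w, p - q⟫ - ⟪gradient g q, p - q⟫
        ≤ Lg / 2 * (‖w - q‖ ^ 2 + ‖q - p‖ ^ 2) := by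
      have h1 : ⟪gradient g w, p - q⟫ - ⟪gradient g q, p - q⟫
          = ⟪gradient g w - gradient g q, p - q⟫ := by rw [inner_sub_left]
      have h2 := real_inner_le_norm (gradient g w - gradient g q) (p - q)
      have h3 := hglip w q
      have h4 : ‖p - q‖ = ‖q - p‖ := norm_sub_rev _ _
      have h5 := mul_le_mul_of_nonneg_right h3 (norm_nonneg (p - q))
      rw [h4] at h2 h5
      nlinarith [mul_nonneg hLg0 (sq_nonneg (‖w - q‖ - ‖q - p‖))]
    have e4 : ‖w - p‖ ^ 2 ≤ ‖p - r‖ ^ 2 := by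
      have h1 : w - p = (1 - θ) • (p - r) := by rw [hzz, add_sub_cancel_left]
      rw [h1, norm_smul, Real.norm_eq_abs, mul_pow]
      have h2 : |1 - θ| ^ 2 ≤ 1 := by
        rw [abs_of_nonneg (by linarith : (0:ℝ) ≤ 1 - θ)]
        nlinarith
      have h3 := mul_le_mul_of_nonneg_right h2 (sq_nonneg ‖p - r‖)
      linarith
    have e4c : c * ‖w - p‖ ^ 2 ≤ c * ‖p - r‖ ^ 2 := mul_le_mul_of_nonneg_left e4 hc0.le
    have hpq : ‖p - q‖ ^ 2 = ‖q - p‖ ^ 2 := by rw [norm_sub_rev]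
    rw [hpq] at hfe hge
    rw [hLdef]
    linarith only [hfe, hge, hA1, e2c, e3, e4c]
  obtain ⟨m, rfl⟩ : ∃ m, 𝒦 = m + 1 := ⟨𝒦 - 1, (Nat.succ_pred_eq_of_pos h𝒦).symm⟩
  have tele : (f (x (m + 1)) + g (x (m + 1))) - (f (x 0) + g (x 0))
      = ∑ k ∈ Finset.range (m + 1),
        ((f (x (k + 1)) + g (x (k + 1))) - (f (x k) + g (x k))) :=
    (Finset.sum_range_sub (fun k => f (x k) + g (x k)) (m + 1)).symm
  have hsum : ∑ k ∈ Finset.range (m + 1),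
        ((f (x (k + 1)) + g (x (k + 1))) - (f (x k) + g (x k)))
      ≤ ∑ k ∈ Finset.range (m + 1),
        (c / 2 * ‖x k - x (k - 1)‖ ^ 2
          + (L / 2 + Lg / 2 - c / 2) * ‖x (k + 1) - x k‖ ^ 2
          + (Lg / 2 - c / 2) * ‖z k - x (k + 1)‖ ^ 2) :=
    Finset.sum_le_sum fun k hk => key k (Finset.mem_range.mp hk)
  have hsplit : ∑ k ∈ Finset.range (m + 1),
        (c / 2 * ‖x k - x (k - 1)‖ ^ 2
          + (L / 2 + Lg / 2 - c / 2) * ‖x (k + 1) - x k‖ ^ 2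
          + (Lg / 2 - c / 2) * ‖z k - x (k + 1)‖ ^ 2)
      = c / 2 * ∑ k ∈ Finset.range (m + 1), ‖x k - x (k - 1)‖ ^ 2
        + (L / 2 + Lg / 2 - c / 2) * ∑ k ∈ Finset.range (m + 1), ‖x (k + 1) - x k‖ ^ 2
        + (Lg / 2 - c / 2) * ∑ k ∈ Finset.range (m + 1), ‖z k - x (k + 1)‖ ^ 2 := by
    rw [Finset.sum_add_distrib, Finset.sum_add_distrib, Finset.mul_sum, Finset.mul_sum,
      Finset.mul_sum]
  have hP : ∑ k ∈ Finset.range (m + 1), ‖x k - x (k - 1)‖ ^ 2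
      ≤ ∑ k ∈ Finset.range (m + 1), ‖x (k + 1) - x k‖ ^ 2 := by
    rw [Finset.sum_range_succ' (fun k => ‖x k - x (k - 1)‖ ^ 2) m]
    simp only [Nat.add_sub_cancel, Nat.zero_sub, sub_self, norm_zero]
    norm_num
    exact Finset.sum_le_sum_of_subset_of_nonneg
      (Finset.range_subset_range.mpr (Nat.le_succ m)) (fun i _ _ => sq_nonneg _)
  have hPc : c / 2 * ∑ k ∈ Finset.range (m + 1), ‖x k - x (k - 1)‖ ^ 2
      ≤ c / 2 * ∑ k ∈ Finset.range (m + 1), ‖x (k + 1) - x k‖ ^ 2 :=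
    mul_le_mul_of_nonneg_left hP (by positivity)
  have hA0 : 0 ≤ ∑ k ∈ Finset.range (m + 1), ‖x (k + 1) - x k‖ ^ 2 :=
    Finset.sum_nonneg fun i _ => sq_nonneg _
  have hB0 : 0 ≤ ∑ k ∈ Finset.range (m + 1), ‖z k - x (k + 1)‖ ^ 2 :=
    Finset.sum_nonneg fun i _ => sq_nonneg _
  have hLf2 : 0 ≤ Lf ^ 2 / (2 * L) := by positivity
  have final1 : (c / 2 + (L / 2 + Lg / 2 - c / 2))
        * ∑ k ∈ Finset.range (m + 1), ‖x (k + 1) - x k‖ ^ 2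
      ≤ 1 / 2 * (c + L) * ∑ k ∈ Finset.range (m + 1), ‖x (k + 1) - x k‖ ^ 2 :=
    mul_le_mul_of_nonneg_right (by linarith) hA0
  have final2 : (Lg / 2 - c / 2) * ∑ k ∈ Finset.range (m + 1), ‖z k - x (k + 1)‖ ^ 2
      ≤ -(c / 2 - Lf ^ 2 / (2 * L) - 3 / 2 * L)
        * ∑ k ∈ Finset.range (m + 1), ‖z k - x (k + 1)‖ ^ 2 :=
    mul_le_mul_of_nonneg_right (by linarith) hB0
  linarith
end

section
/- (Inexact inertial forward–backward decrease for a separable quadratic model.) Let θ ∈ (0,1], L > 0, 0 < η ≤ 1/(8L), ρ > 0, B ≥ 0. Let Λ ∈ ℝ^{d×d} be a diagonal matrix whose every diagonal entry λ_j satisfies −θ/η ≤ λ_j ≤ L, let x̃⁰, b ∈ ℝ^d, and set ĝ(x) = ⟨b, x − x̃⁰⟩ + (1/2)·⟨Λ(x − x̃⁰), x − x̃⁰⟩. Let f̂ : ℝ^d → ℝ be differentiable and convex and set F̂ = f̂ + ĝ. Let x̃^{−1} = x̃⁰, x̃¹, …, x̃^𝒦, z̃⁰, …, z̃^{𝒦−1},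 and error vectors δ⁰, …, δ^{𝒦−1} ∈ ℝ^d with ‖δ^k‖ ≤ (9/2)·ρ·B², satisfy z̃^k = x̃^k + (1−θ)(x̃^k − x̃^{k−1}) and x̃^{k+1} = z̃^k − η·∇ĝ(z̃^k) − η·∇f̂(x̃^{k+1}) + η·δ^k for k = 0,…,𝒦−1 (𝒦 ≥ 1). Then F̂(x̃^𝒦) ≤ F̂(x̃⁰) − (3θ/(8η))·Σ_{k=0}^{𝒦−1}‖x̃^{k+1} − x̃^k‖² + 81·η·ρ²·B⁴·𝒦/(2θ). -/
open scoped RealInnerProductSpace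

noncomputable abbrev Amap {d : ℕ} (lam : Fin d → ℝ) :
    EuclideanSpace ℝ (Fin d) →L[ℝ] EuclideanSpace ℝ (Fin d) :=
  ((EuclideanSpace.equiv (Fin d) ℝ).symm : (Fin d → ℝ) →L[ℝ] EuclideanSpace ℝ (Fin d)).comp
    ((ContinuousLinearMap.pi fun j => lam j • ContinuousLinearMap.proj j).comp
      ((EuclideanSpace.equiv (Fin d) ℝ) : EuclideanSpace ℝ (Fin d) →L[ℝ] (Fin d → ℝ)))

lemma Amap_inner {d : ℕ} (lam : Fin d → ℝ) (u v : EuclideanSpace ℝ (Fin d)) :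
    ⟪Amap lam u, v⟫ = ∑ j, lam j * u j * v j := by
  simp [Amap, PiLp.inner_apply, RCLike.inner_apply, mul_assoc]
  exact Finset.sum_congr rfl fun j _ => by ring

lemma Amap_symm {d : ℕ} (lam : Fin d → ℝ) (u v : EuclideanSpace ℝ (Fin d)) :
    ⟪Amap lam u, v⟫ = ⟪u, Amap lam v⟫ := by
  rw [Amap_inner, real_inner_comm, Amap_inner]
  exact Finset.sum_congr rfl fun j _ => by ring

lemma Amap_quad_le {d : ℕ} (lam : Fin d → ℝ) (hi : ℝ) (h : ∀ j, lam j ≤ hi)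
    (u : EuclideanSpace ℝ (Fin d)) : ⟪Amap lam u, u⟫ ≤ hi * ‖u‖ ^ 2 := by
  have hn : ‖u‖ ^ 2 = ∑ j, u j * u j := by
    rw [EuclideanSpace.norm_sq_eq]
    exact Finset.sum_congr rfl fun j _ => by rw [Real.norm_eq_abs, sq_abs, sq]
  rw [Amap_inner, hn, Finset.mul_sum]
  exact Finset.sum_le_sum fun j _ => by nlinarith [sq_nonneg (u j), h j]

lemma Amap_quad_ge {d : ℕ} (lam : Fin d → ℝ) (lo : ℝ) (h : ∀ j, lo ≤ lam j)
    (u : EuclideanSpace ℝ (Fin d)) : lo * ‖u‖ ^ 2 ≤ ⟪Amap lam u, u⟫ := by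
  have hn : ‖u‖ ^ 2 = ∑ j, u j * u j := by
    rw [EuclideanSpace.norm_sq_eq]
    exact Finset.sum_congr rfl fun j _ => by rw [Real.norm_eq_abs, sq_abs, sq]
  rw [Amap_inner, hn, Finset.mul_sum]
  exact Finset.sum_le_sum fun j _ => by nlinarith [sq_nonneg (u j), h j]

lemma hasGradientAt_quad {d : ℕ} (lam : Fin d → ℝ) (b x0 : EuclideanSpace ℝ (Fin d))
    (w : EuclideanSpace ℝ (Fin d)) :
    HasGradientAt (fun v => ⟪b, v - x0⟫ + (1/2) * ⟪Amap lam (v - x0), v - x0⟫)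
      (b + Amap lam (w - x0)) w := by
  have hsub : HasFDerivAt (fun v : EuclideanSpace ℝ (Fin d) => v - x0)
      (ContinuousLinearMap.id ℝ _) w := (hasFDerivAt_id w).sub_const x0
  have hA : HasFDerivAt (fun v : EuclideanSpace ℝ (Fin d) => Amap lam (v - x0))
      (Amap lam) w := by
    exact ((Amap lam).hasFDerivAt.comp w hsub)
  have h1 : HasFDerivAt (fun v : EuclideanSpace ℝ (Fin d) => (⟪b, v - x0⟫ : ℝ))
      ((fderivInnerCLM ℝ (b, w - x0)).comp
        ((0 : _ →L[ℝ] _).prod (ContinuousLinearMap.id ℝ _))) w :=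
    (hasFDerivAt_const b w).inner ℝ hsub
  have h2 : HasFDerivAt
      (fun v : EuclideanSpace ℝ (Fin d) => (⟪Amap lam (v - x0), v - x0⟫ : ℝ))
      ((fderivInnerCLM ℝ (Amap lam (w - x0), w - x0)).comp
        ((Amap lam).prod (ContinuousLinearMap.id ℝ _))) w :=
    hA.inner ℝ hsub
  have h3 := h1.add (h2.const_mul (1/2 : ℝ))
  rw [hasGradientAt_iff_hasFDerivAt]
  refine h3.congr_fderiv ?_
  apply ContinuousLinearMap.ext
  intro v
  simp [fderivInnerCLM_apply, InnerProductSpace.toDual_apply_apply, inner_add_left,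
    real_inner_comm (Amap lam (w - x0)) v, Amap_symm lam v (w - x0), real_inner_comm v]
  simp only [PiLp.inner_apply, RCLike.inner_apply, conj_trivial, PiLp.toLp_apply, PiLp.sub_apply]
  rw [← Finset.sum_add_distrib, Finset.mul_sum]
  exact Finset.sum_congr rfl fun j _ => by ring

lemma convex_grad_ineq {E : Type*} [NormedAddCommGroup E] [InnerProductSpace ℝ E]
    [CompleteSpace E]
    (f : E → ℝ) (hdiff : Differentiable ℝ f) (hconv : ConvexOn ℝ Set.univ f) (u v : E) :
    f v + ⟪gradient f v, u - v⟫ ≤ f u := by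
  set γ : ℝ →ᵃ[ℝ] E := AffineMap.lineMap v u with hγdef
  have hφconv : ConvexOn ℝ Set.univ (f ∘ γ) := by
    simpa using hconv.comp_affineMap γ
  have hγ : HasDerivAt (fun t : ℝ => γ t) (u - v) 0 := by
    have h0 : HasDerivAt (fun t : ℝ => t • (u - v) + v) ((1:ℝ) • (u - v)) 0 :=
      ((hasDerivAt_id (0:ℝ)).smul_const (u - v)).add_const v
    have heq : (fun t : ℝ => t • (u - v) + v) = fun t : ℝ => (1 - t) • v + t • u :=
      funext fun t => by module
    rw [heq] at h0
    simpa [hγdef, AffineMap.lineMap_apply_module] using h0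
  have hf' : HasFDerivAt f (InnerProductSpace.toDual ℝ E (gradient f v)) v :=
    ((hdiff v).hasGradientAt).hasFDerivAt
  have hf'' : HasFDerivAt f (InnerProductSpace.toDual ℝ E (gradient f v)) (γ 0) := by
    simpa [hγdef] using hf'
  have hder : HasDerivAt (f ∘ γ) (⟪gradient f v, u - v⟫ : ℝ) 0 := by
    simpa [InnerProductSpace.toDual_apply_apply] using hf''.comp_hasDerivAt 0 hγ
  have hslope := hφconv.le_slope_of_hasDerivAt (Set.mem_univ (0:ℝ)) (Set.mem_univ (1:ℝ))
    one_pos hder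
  rw [slope_def_field] at hslope
  simp [hγdef] at hslope
  have hfd : fderiv ℝ f v = InnerProductSpace.toDual ℝ E (gradient f v) := hf'.fderiv
  simp only [hfd, InnerProductSpace.toDual_apply_apply] at hslope
  rw [inner_sub_right]
  linarith

set_option maxHeartbeats 1000000 in
/-- Inexact inertial forward–backward decrease for a separable
quadratic model.  The diagonal matrix `Λ` is given by its diagonal entries
`lam : Fin d → ℝ`, acting coordinatewise on `EuclideanSpace ℝ (Fin d)`
(the convention `x̃^{-1} = x̃^0` is realized by truncated subtraction on `ℕ`). -/
theorem inexact_inertial_fb_quadratic_decrease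
    {d : ℕ} (hd : 1 ≤ d)
    (θ L η ρ B : ℝ)
    (hθ0 : 0 < θ) (hθ1 : θ ≤ 1) (hL : 0 < L)
    (hη0 : 0 < η) (hη1 : η ≤ 1 / (8 * L))
    (hρ : 0 < ρ) (hB : 0 ≤ B)
    (lam : Fin d → ℝ) (hlam : ∀ j, -θ / η ≤ lam j ∧ lam j ≤ L)
    (xt0 b : EuclideanSpace ℝ (Fin d))
    (fHat gHat : EuclideanSpace ℝ (Fin d) → ℝ)
    (hgdef : ∀ w : EuclideanSpace ℝ (Fin d),
      gHat w = (inner ℝ b (w - xt0) : ℝ)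
        + (1 / 2) * (inner ℝ
            ((EuclideanSpace.equiv (Fin d) ℝ).symm fun j => lam j * (w - xt0) j)
            (w - xt0) : ℝ))
    (hfdiff : Differentiable ℝ fHat)
    (hfconv : ConvexOn ℝ Set.univ fHat)
    (𝒦 : ℕ) (h𝒦 : 1 ≤ 𝒦)
    (x z δ : ℕ → EuclideanSpace ℝ (Fin d))
    (hx0 : x 0 = xt0)
    (hδ : ∀ k < 𝒦, ‖δ k‖ ≤ (9 / 2) * ρ * B ^ 2)
    (hz : ∀ k < 𝒦, z k = x k + (1 - θ) • (x k - x (k - 1)))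
    (hstep : ∀ k < 𝒦,
      x (k + 1) = z k - η • gradient gHat (z k) - η • gradient fHat (x (k + 1))
        + η • δ k) :
    fHat (x 𝒦) + gHat (x 𝒦) ≤ fHat (x 0) + gHat (x 0)
      - (3 * θ / (8 * η)) * ∑ k ∈ Finset.range 𝒦, ‖x (k + 1) - x k‖ ^ 2
      + 81 * η * ρ ^ 2 * B ^ 4 * 𝒦 / (2 * θ) := by
  set A : EuclideanSpace ℝ (Fin d) →L[ℝ] EuclideanSpace ℝ (Fin d) := Amap lam with hAdef
  have hηne : η ≠ 0 := ne_of_gt hη0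
  -- basic bounds on lam
  have hL8 : L ≤ 1 / (8 * η) := by
    rw [le_div_iff₀ (by positivity)] at hη1 ⊢
    nlinarith
  have hlamub : ∀ j, lam j ≤ 1 / η := fun j => by
    have := (hlam j).2
    have h8 : (1:ℝ)/(8*η) ≤ 1/η := by
      rw [div_le_div_iff₀ (by positivity) (by positivity)]; nlinarith
    linarith
  -- gradient of gHat
  have hg' : ∀ w : EuclideanSpace ℝ (Fin d), gHat w = ⟪b, w - xt0⟫ + (1/2) * ⟪A (w - xt0), w - xt0⟫ := hgdef
  have hgradg : ∀ w : EuclideanSpace ℝ (Fin d), gradient gHat w = b + A (w - xt0) := by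
    intro w
    have heq : gHat = fun v => ⟪b, v - xt0⟫ + (1/2) * ⟪Amap lam (v - xt0), v - xt0⟫ :=
      funext fun v => hg' v
    rw [heq]
    exact (hasGradientAt_quad lam b xt0 w).gradient
  -- quadratic expansion of gHat
  have hq : ∀ uu vv : EuclideanSpace ℝ (Fin d), gHat uu = gHat vv + ⟪b + A (vv - xt0), uu - vv⟫
      + (1/2) * ⟪A (uu - vv), uu - vv⟫ := by
    intro uu vv
    have hpq : uu - vv = (uu - xt0) - (vv - xt0) := by abel
    rw [hg' uu, hg' vv, hpq]
    set p := uu - xt0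
    set q := vv - xt0
    have hs : ⟪A p, q⟫ = ⟪A q, p⟫ := by
      rw [hAdef, Amap_symm, real_inner_comm]
    simp only [inner_add_left, inner_sub_left, inner_sub_right, map_sub]
    linarith
  -- the quadratic form Q
  set Qf : EuclideanSpace ℝ (Fin d) → ℝ := fun u => (1/η) * ‖u‖ ^ 2 - ⟪A u, u⟫ with hQfdef
  have hQ0 : ∀ u : EuclideanSpace ℝ (Fin d), 0 ≤ Qf u := by
    intro u
    have h1 : ⟪A u, u⟫ ≤ (1/η) * ‖u‖ ^ 2 := Amap_quad_le lam (1/η) hlamub u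
    simp only [hQfdef]; linarith
  have hQub : ∀ u : EuclideanSpace ℝ (Fin d), Qf u ≤ ((1+θ)/η) * ‖u‖ ^ 2 := by
    intro u
    have h1 : (-θ/η) * ‖u‖ ^ 2 ≤ ⟪A u, u⟫ :=
      Amap_quad_ge lam (-θ/η) (fun j => (hlam j).1) u
    have h2 : (1/η) * ‖u‖^2 - (-θ/η) * ‖u‖^2 = ((1+θ)/η) * ‖u‖^2 := by
      field_simp; ring
    simp only [hQfdef]; linarith
  have hcross : ∀ u v : EuclideanSpace ℝ (Fin d), (1/η) * ⟪u, v⟫ - ⟪A u, v⟫ ≤ (Qf u + Qf v) / 2 := by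
    intro u v
    have h0 := hQ0 (u - v)
    have hn : ‖u - v‖ ^ 2 = ‖u‖^2 - 2 * ⟪u, v⟫ + ‖v‖^2 := norm_sub_sq_real u v
    have hs : ⟪A u, v⟫ = ⟪A v, u⟫ := by rw [hAdef, Amap_symm, real_inner_comm]
    have hexp : ⟪A (u - v), u - v⟫ = ⟪A u, u⟫ - 2 * ⟪A u, v⟫ + ⟪A v, v⟫ := by
      simp only [map_sub, inner_sub_left, inner_sub_right]
      linarith
    simp only [hQfdef] at h0 ⊢
    rw [hn, hexp] at h0
    linarith
  -- abbreviations
  set P : ℕ → ℝ := fun k => fHat (x k) + gHat (x k) with hPdef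
  set c : ℕ → ℝ := fun k => ‖x (k + 1) - x k‖ ^ 2 with hcdef
  set QQ : ℕ → ℝ := fun k => Qf (x k - x (k - 1)) with hQQdef
  set Err : ℝ := 81 * η * ρ ^ 2 * B ^ 4 / (2 * θ) with hErrdef
  -- per-step inequality
  have key : ∀ k, k < 𝒦 → P (k+1) - P k ≤ (θ/(8*η) - 1/(2*η)) * c k
      - (θ/2) * QQ (k+1) + ((1-θ)/2) * QQ k + Err := by
    intro k hk
    set u1 : EuclideanSpace ℝ (Fin d) := x (k+1) - x k with hu1def
    set u0 : EuclideanSpace ℝ (Fin d) := x k - x (k-1) with hu0def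
    set G : EuclideanSpace ℝ (Fin d) := b + A (z k - xt0) with hGdef
    set F : EuclideanSpace ℝ (Fin d) := gradient fHat (x (k+1)) with hFdef
    have hsym1 : ⟪A u1, u0⟫ = ⟪A u0, u1⟫ := by rw [hAdef, Amap_symm, real_inner_comm]
    have e1 : x k - z k = -((1-θ) • u0) := by rw [hz k hk]; module
    have e2 : x (k+1) - z k = u1 - (1-θ) • u0 := by rw [hz k hk, hu1def, hu0def]; module
    have e3 : z k - x (k+1) = (1-θ) • u0 - u1 := by rw [hz k hk, hu1def, hu0def]; module
    -- f part
    have hfineq : fHat (x (k+1)) - fHat (x k) ≤ ⟪F, u1⟫ := by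
      have h := convex_grad_ineq fHat hfdiff hfconv (x k) (x (k+1))
      have h2 : ⟪F, x k - x (k+1)⟫ = -⟪F, u1⟫ := by
        rw [hu1def, ← inner_neg_right]; congr 1; abel
      rw [← hFdef, h2] at h
      linarith
    -- identify F from the step equation
    have hFeq : η • F = z k - x (k+1) - η • G + η • δ k := by
      have h := hstep k hk
      rw [hgradg (z k), ← hGdef, ← hFdef] at h
      have h2 : η • F = z k - (z k - η • G - η • F + η • δ k) - η • G + η • δ k := by
        module
      rw [← h] at h2
      exact h2
    have hFu : η * ⟪F, u1⟫ = ((1-θ) * ⟪u0, u1⟫ - ⟪u1, u1⟫) - η * ⟪G, u1⟫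
        + η * ⟪δ k, u1⟫ := by
      rw [e3] at hFeq
      have h2 := congrArg (fun w : EuclideanSpace ℝ (Fin d) => (⟪w, u1⟫ : ℝ)) hFeq
      simp only [inner_sub_left, inner_add_left, real_inner_smul_left] at h2
      linarith
    have hFu' : ⟪F, u1⟫ = (1/η) * ((1-θ) * ⟪u0, u1⟫ - ⟪u1, u1⟫) - ⟪G, u1⟫
        + ⟪δ k, u1⟫ := by
      have hηinv : (1/η) * η = 1 := by field_simp
      calc (⟪F, u1⟫ : ℝ) = (1/η) * (η * ⟪F, u1⟫) := by
            rw [← mul_assoc, hηinv, one_mul]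
        _ = (1/η) * ((1-θ) * ⟪u0, u1⟫ - ⟪u1, u1⟫) - ⟪G, u1⟫ + ⟪δ k, u1⟫ := by
            rw [hFu]
            have h2 : (1/η) * (η * ⟪G, u1⟫) = ⟪G, u1⟫ := by
              rw [← mul_assoc, hηinv, one_mul]
            have h3 : (1/η) * (η * ⟪δ k, u1⟫) = ⟪δ k, u1⟫ := by
              rw [← mul_assoc, hηinv, one_mul]
            nlinarith [h2, h3]
    -- g part
    have hg1 := hq (x (k+1)) (z k)
    have hg2 := hq (x k) (z k)
    rw [e2, ← hGdef] at hg1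
    rw [e1, ← hGdef] at hg2
    have s1 : ⟪A (u1 - (1-θ) • u0), u1 - (1-θ) • u0⟫
        = ⟪A u1, u1⟫ - 2*(1-θ) * ⟪A u0, u1⟫ + (1-θ)^2 * ⟪A u0, u0⟫ := by
      simp only [map_sub, map_smul, inner_sub_left, inner_sub_right,
        real_inner_smul_left, real_inner_smul_right, hsym1]
      ring
    have s2 : ⟪A (-((1-θ) • u0)), -((1-θ) • u0)⟫ = (1-θ)^2 * ⟪A u0, u0⟫ := by
      simp only [map_neg, map_smul, inner_neg_left, inner_neg_right,
        real_inner_smul_left, real_inner_smul_right]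
      ring
    have hG1 : ⟪G, u1 - (1-θ) • u0⟫ = ⟪G, u1⟫ - (1-θ) * ⟪G, u0⟫ := by
      simp only [inner_sub_right, real_inner_smul_right]
    have hG2 : ⟪G, -((1-θ) • u0)⟫ = -((1-θ) * ⟪G, u0⟫) := by
      simp only [inner_neg_right, real_inner_smul_right]
    rw [s1, hG1] at hg1
    rw [s2, hG2] at hg2
    have hgdiff : gHat (x (k+1)) - gHat (x k)
        = ⟪G, u1⟫ + (1/2) * ⟪A u1, u1⟫ - (1-θ) * ⟪A u0, u1⟫ := by
      linarith
    -- error term bound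
    have hδk := hδ k hk
    have hδnn : (0:ℝ) ≤ ‖δ k‖ := norm_nonneg _
    have hu1nn : (0:ℝ) ≤ ‖u1‖ := norm_nonneg _
    have he1 : ⟪δ k, u1⟫ ≤ ‖δ k‖ * ‖u1‖ := real_inner_le_norm _ _
    have he2 : ‖δ k‖ * ‖u1‖ ≤ (θ/(8*η)) * ‖u1‖^2 + (2*η/θ) * ‖δ k‖^2 := by
      rw [← sub_nonneg]
      have key2 : (θ/(8*η)) * ‖u1‖^2 + (2*η/θ) * ‖δ k‖^2 - ‖δ k‖ * ‖u1‖
          = (θ * ‖u1‖ - 4 * η * ‖δ k‖)^2 / (8 * η * θ) := by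
        field_simp
        ring
      rw [key2]
      positivity
    have he3 : ‖δ k‖^2 ≤ (81/4) * ρ^2 * B^4 := by
      calc ‖δ k‖^2 ≤ (9/2*ρ*B^2)^2 := by
            apply pow_le_pow_left₀ hδnn
            linarith [hδk]
        _ = (81/4) * ρ^2 * B^4 := by ring
    have he4 : (2*η/θ) * ‖δ k‖^2 ≤ Err := by
      rw [hErrdef]
      have h1 : (2*η/θ) * ‖δ k‖^2 ≤ (2*η/θ) * ((81/4) * ρ^2 * B^4) := by
        apply mul_le_mul_of_nonneg_left he3 (by positivity)
      have h2 : (2*η/θ) * ((81/4) * ρ^2 * B^4) = 81 * η * ρ ^ 2 * B ^ 4 / (2 * θ) := by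
        field_simp; ring
      linarith
    have he : ⟪δ k, u1⟫ ≤ (θ/(8*η)) * ‖u1‖^2 + Err := by linarith
    -- combine
    have hcr := hcross u0 u1
    have hcr' : (1-θ) * ((1/η) * ⟪u0, u1⟫ - ⟪A u0, u1⟫)
        ≤ (1-θ) * ((Qf u0 + Qf u1) / 2) :=
      mul_le_mul_of_nonneg_left hcr (by linarith)
    have hin1 : ⟪u1, u1⟫ = ‖u1‖^2 := real_inner_self_eq_norm_sq u1
    have hQu1 : Qf u1 = (1/η) * ‖u1‖^2 - ⟪A u1, u1⟫ := rfl
    have hQu0 : Qf u0 = (1/η) * ‖u0‖^2 - ⟪A u0, u0⟫ := rfl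
    have hcku : c k = ‖u1‖^2 := rfl
    have hQQ1 : QQ (k+1) = Qf u1 := by
      simp only [hQQdef, hu1def, Nat.add_sub_cancel]
    have hQQ0 : QQ k = Qf u0 := rfl
    have hPP : P (k+1) - P k = (fHat (x (k+1)) - fHat (x k))
        + (gHat (x (k+1)) - gHat (x k)) := by simp only [hPdef]; ring
    rw [hPP, hQQ1, hQQ0, hcku]
    have hηinv : (0:ℝ) < 1/η := by positivity
    -- final arithmetic: combine hfineq, hFu', hgdiff, hcr', he
    have hmain : (fHat (x (k+1)) - fHat (x k)) + (gHat (x (k+1)) - gHat (x k))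
        ≤ (1/η) * ((1-θ) * ⟪u0, u1⟫ - ‖u1‖^2) + ⟪δ k, u1⟫
          + (1/2) * ⟪A u1, u1⟫ - (1-θ) * ⟪A u0, u1⟫ := by
      rw [← hin1]
      linarith [hfineq, hFu', hgdiff]
    have harith : (1/η) * ((1-θ) * ⟪u0, u1⟫ - ‖u1‖^2) + (1/2) * ⟪A u1, u1⟫
          - (1-θ) * ⟪A u0, u1⟫
        = (1-θ) * ((1/η) * ⟪u0, u1⟫ - ⟪A u0, u1⟫) - (1/(2*η)) * ‖u1‖^2
          - (1/2) * Qf u1 := by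
      rw [hQu1]; field_simp; ring
    have hfinal : (1-θ) * ((Qf u0 + Qf u1) / 2) - (1/(2*η)) * ‖u1‖^2 - (1/2) * Qf u1
          + (θ/(8*η)) * ‖u1‖^2 + Err
        = (θ/(8*η) - 1/(2*η)) * ‖u1‖^2 - (θ/2) * Qf u1 + ((1-θ)/2) * Qf u0 + Err := by
      ring
    linarith [hmain, hcr', he]
  -- summation
  have htel : P 𝒦 - P 0 = ∑ k ∈ Finset.range 𝒦, (P (k+1) - P k) :=
    (Finset.sum_range_sub P 𝒦).symm
  have hsum1 : ∑ k ∈ Finset.range 𝒦, (P (k+1) - P k)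
      ≤ ∑ k ∈ Finset.range 𝒦, ((θ/(8*η) - 1/(2*η)) * c k
          - (θ/2) * QQ (k+1) + ((1-θ)/2) * QQ k + Err) :=
    Finset.sum_le_sum fun k hk => key k (Finset.mem_range.mp hk)
  set S : ℝ := ∑ k ∈ Finset.range 𝒦, c k with hSdef
  set T1 : ℝ := ∑ k ∈ Finset.range 𝒦, QQ (k+1) with hT1def
  set T0 : ℝ := ∑ k ∈ Finset.range 𝒦, QQ k with hT0def
  have hsplit : ∑ k ∈ Finset.range 𝒦, ((θ/(8*η) - 1/(2*η)) * c k
        - (θ/2) * QQ (k+1) + ((1-θ)/2) * QQ k + Err)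
      = (θ/(8*η) - 1/(2*η)) * S - (θ/2) * T1 + ((1-θ)/2) * T0 + 𝒦 * Err := by
    simp only [Finset.sum_add_distrib, Finset.sum_sub_distrib, ← Finset.mul_sum,
      Finset.sum_const, Finset.card_range, nsmul_eq_mul, hSdef, hT1def, hT0def]
  -- T0 ≤ T1
  obtain ⟨m, rfl⟩ : ∃ m, 𝒦 = m + 1 := ⟨𝒦 - 1, (Nat.succ_pred_eq_of_pos h𝒦).symm⟩
  have hQQ0eq : QQ 0 = 0 := by
    have h1 : x 0 - x (0 - 1) = (0 : EuclideanSpace ℝ (Fin d)) := by norm_num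
    simp only [hQQdef, h1, hQfdef]
    simp
  have hT0T1 : T0 ≤ T1 := by
    rw [hT0def, hT1def, Finset.sum_range_succ' QQ m,
      Finset.sum_range_succ (fun k => QQ (k+1)) m]
    have := hQ0 (x (m+1+1) - x (m+1+1-1))
    have hQm : (0:ℝ) ≤ QQ (m+1) := hQ0 _
    simp only [hQQ0eq, add_zero]
    linarith
  -- termwise bound for the Q-sum
  have hterm : ∀ k ∈ Finset.range (m+1), ((1-2*θ)/2) * QQ (k+1) ≤ ((1-θ)/(2*η)) * c k := by
    intro k _
    have hub : QQ (k+1) ≤ ((1+θ)/η) * c k := by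
      have := hQub (x (k+1) - x (k+1-1))
      simpa only [hQQdef, hcdef, Nat.add_sub_cancel] using this
    have hnn : (0:ℝ) ≤ QQ (k+1) := hQ0 _
    have hcnn : (0:ℝ) ≤ c k := by simp only [hcdef]; positivity
    rcases le_or_gt θ (1/2) with hhalf | hhalf
    · have h1 : (0:ℝ) ≤ (1-2*θ)/2 := by linarith
      have h2 : ((1-2*θ)/2) * QQ (k+1) ≤ ((1-2*θ)/2) * (((1+θ)/η) * c k) :=
        mul_le_mul_of_nonneg_left hub h1
      have h3 : ((1-2*θ)/2) * (((1+θ)/η) * c k) ≤ ((1-θ)/(2*η)) * c k := by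
        rw [← sub_nonneg]
        have heq : ((1-θ)/(2*η)) * c k - ((1-2*θ)/2) * (((1+θ)/η) * c k)
            = (θ^2/η) * c k := by field_simp; ring
        rw [heq]; positivity
      linarith
    · have h1 : ((1-2*θ)/2) * QQ (k+1) ≤ 0 :=
        mul_nonpos_of_nonpos_of_nonneg (by linarith) hnn
      have h2 : (0:ℝ) ≤ ((1-θ)/(2*η)) * c k := by
        apply mul_nonneg _ hcnn
        apply div_nonneg (by linarith) (by linarith)
      linarith
  have hQsum : -(θ/2) * T1 + ((1-θ)/2) * T0 ≤ ((1-θ)/(2*η)) * S := by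
    have h1 : ((1-θ)/2) * T0 ≤ ((1-θ)/2) * T1 :=
      mul_le_mul_of_nonneg_left hT0T1 (by linarith)
    have h2 : -(θ/2) * T1 + ((1-θ)/2) * T1 = ((1-2*θ)/2) * T1 := by ring
    have h3 : ((1-2*θ)/2) * T1 = ∑ k ∈ Finset.range (m+1), ((1-2*θ)/2) * QQ (k+1) := by
      rw [hT1def, Finset.mul_sum]
    have h4 : ∑ k ∈ Finset.range (m+1), ((1-2*θ)/2) * QQ (k+1)
        ≤ ∑ k ∈ Finset.range (m+1), ((1-θ)/(2*η)) * c k :=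
      Finset.sum_le_sum hterm
    have h5 : ∑ k ∈ Finset.range (m+1), ((1-θ)/(2*η)) * c k = ((1-θ)/(2*η)) * S := by
      rw [hSdef, Finset.mul_sum]
    linarith
  -- final arithmetic
  have hcoef : (θ/(8*η) - 1/(2*η)) * S + ((1-θ)/(2*η)) * S = -(3 * θ / (8 * η)) * S := by
    have h : (θ/(8*η) - 1/(2*η)) + ((1-θ)/(2*η)) = -(3 * θ / (8 * η)) := by
      field_simp; ring
    calc (θ/(8*η) - 1/(2*η)) * S + ((1-θ)/(2*η)) * S
        = ((θ/(8*η) - 1/(2*η)) + ((1-θ)/(2*η))) * S := by ring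
      _ = -(3 * θ / (8 * η)) * S := by rw [h]
  have hErrK : (↑(m+1) : ℝ) * Err = 81 * η * ρ ^ 2 * B ^ 4 * ↑(m+1) / (2 * θ) := by
    rw [hErrdef]; ring
  show P (m+1) ≤ P 0 - (3 * θ / (8 * η)) * S
      + 81 * η * ρ ^ 2 * B ^ 4 * ↑(m+1) / (2 * θ)
  rw [hsplit] at hsum1
  clear_value Err T0 T1 S QQ c P Qf A
  linarith [hsum1, hQsum, hcoef, hErrK, htel]
end
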